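/- Let n ≥ 2. If T : S^n_+ → S^n_+ is a bijective map that is 1-Lipschitz with respect to the geodesic distance, then T is an isometry fixing the north pole N (there exists an n×n orthogonal matrix A with T((z,x_{n+1})) = (Az, x_{n+1}) for all (z,x_{n+1}) ∈ S^n_+). In particular, the pushforward of σ_+ under T equals σ_+. -/

import Mathlib

open MeasureTheory Real

noncomputable section

/-- Euclidean space `ℝ^{n+1}`. -/
abbrev Euc (n : ℕ) := EuclideanSpace ℝ (Fin (n + 1))

/-- The unit sphere `S^n ⊆ ℝ^{n+1}`. -/
def unitSphere (n : ℕ) : Set (Euc n) := Metric.sphere 0 1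

/-- The closed upper half-sphere `S^n_+`. -/
def upperHemi (n : ℕ) : Set (Euc n) := {x ∈ unitSphere n | 0 ≤ x (Fin.last n)}

/-- The equator `C = S^n_+ ∩ {x_{n+1} = 0}`. -/
def equator (n : ℕ) : Set (Euc n) := {x ∈ upperHemi n | x (Fin.last n) = 0}

/-- The geodesic distance on the sphere: `d(x,y) = arccos (x ⬝ y)`. -/
def geod {n : ℕ} (x y : Euc n) : ℝ := Real.arccos (inner ℝ x y)

/-- The north pole `N = (0,…,0,1)`. -/
def northPole (n : ℕ) : Euc n := EuclideanSpace.single (Fin.last n) 1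

/-- The uniform probability measure `σ_+` on the upper half-sphere, i.e. the normalized
restriction to `S^n_+` of the `n`-dimensional Hausdorff measure. -/
def sigmaPlus (n : ℕ) : Measure (Euc n) :=
  ((μH[n] : Measure (Euc n)) (upperHemi n))⁻¹ • (μH[n] : Measure (Euc n)).restrict (upperHemi n)

/-- A 1-Lipschitz surjection of a compact metric space is an isometry. -/
theorem surj_lip_isom {X : Type*} [MetricSpace X] [CompactSpace X] (f : X → X)
    (hs : Function.Surjective f) (hl : ∀ a b, dist (f a) (f b) ≤ dist a b) :
    ∀ a b, dist (f a) (f b) = dist a b := by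
  have hiter : ∀ (k : ℕ) (a b : X), dist (f^[k] a) (f^[k] b) ≤ dist a b := by
    intro k
    induction k with
    | zero => simp
    | succ k ih =>
      intro a b
      rw [Function.iterate_succ_apply]
      exact (ih _ _).trans (hl a b)
  intro a b
  refine le_antisymm (hl a b) ?_
  refine le_of_forall_pos_le_add fun ε hε => ?_
  set g := Function.surjInv hs with hg
  have hfg : ∀ x, f (g x) = x := fun x => Function.surjInv_eq hs x
  have hfgk : ∀ (k : ℕ) (x : X), f^[k] (g^[k] x) = x := by
    intro k
    induction k with
    | zero => simp
    | succ k ih =>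
      intro x
      rw [Function.iterate_succ_apply, Function.iterate_succ_apply']
      rw [hfg]
      exact ih x
  set u : ℕ → X × X := fun k => (g^[k] a, g^[k] b) with hu
  obtain ⟨p, -, φ, hφ, hconv⟩ := isCompact_univ.tendsto_subseq (fun k => Set.mem_univ (u k))
  rw [Metric.tendsto_atTop] at hconv
  obtain ⟨M, hM⟩ := hconv (ε / 4) (by linarith)
  set m := φ M with hm
  set k := φ (M + 1) with hk
  have hmk : m < k := hφ (Nat.lt_succ_self M)
  have h1 : dist (u m) (u k) < ε / 2 := by
    calc dist (u m) (u k) ≤ dist (u m) p + dist (u k) p := dist_triangle_right _ _ _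
    _ < ε / 4 + ε / 4 := add_lt_add (hM M le_rfl) (hM (M + 1) (Nat.le_succ M))
    _ = ε / 2 := by ring
  rw [Prod.dist_eq] at h1
  have h1a : dist (g^[m] a) (g^[k] a) < ε / 2 := (le_max_left _ _).trans_lt h1
  have h1b : dist (g^[m] b) (g^[k] b) < ε / 2 := (le_max_right _ _).trans_lt h1
  set q := k - m with hq
  have hq1 : 1 ≤ q := by omega
  have hkq : k = m + q := by omega
  have key : ∀ x : X, dist (g^[m] x) (g^[k] x) < ε / 2 → dist x (g^[q] x) < ε / 2 := by
    intro x hx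
    have h := hiter m (g^[m] x) (g^[k] x)
    have e1 : g^[k] x = g^[m] (g^[q] x) := by
      rw [hkq, Function.iterate_add_apply]
    rw [hfgk m x, e1, hfgk m (g^[q] x)] at h
    rw [e1] at hx
    exact lt_of_le_of_lt h hx
  have h2a : dist a (g^[q] a) < ε / 2 := key a h1a
  have h2b : dist b (g^[q] b) < ε / 2 := key b h1b
  set a' := g^[q] a with ha'
  set b' := g^[q] b with hb'
  have h3 : dist a b ≤ dist (f a') (f b') := by
    have hfa : f^[q] a' = a := hfgk q a
    have hfb : f^[q] b' = b := hfgk q b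
    calc dist a b = dist (f^[q] a') (f^[q] b') := by rw [hfa, hfb]
    _ = dist (f^[q-1] (f a')) (f^[q-1] (f b')) := by
        rw [← Function.iterate_succ_apply, ← Function.iterate_succ_apply]
        congr 2 <;> omega
    _ ≤ dist (f a') (f b') := hiter _ _ _
  calc dist a b ≤ dist (f a') (f b') := h3
  _ ≤ dist (f a') (f a) + dist (f a) (f b) + dist (f b) (f b') := dist_triangle4 _ _ _ _
  _ ≤ dist a' a + dist (f a) (f b) + dist b b' := by
      gcongr
      · exact hl a' a
      · exact hl b b'
  _ ≤ ε / 2 + dist (f a) (f b) + ε / 2 := by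
      rw [dist_comm a' a]
      gcongr
  _ = dist (f a) (f b) + ε := by ring

lemma inner_of_unit {n : ℕ} {x y : Euc n} (hx : ‖x‖ = 1) (hy : ‖y‖ = 1) :
    (inner ℝ x y : ℝ) = 1 - dist x y ^ 2 / 2 := by
  have h := norm_sub_sq_real x y
  rw [hx, hy] at h
  rw [dist_eq_norm]
  nlinarith [h]

lemma inner_mem_Icc {n : ℕ} {x y : Euc n} (hx : ‖x‖ = 1) (hy : ‖y‖ = 1) :
    (inner ℝ x y : ℝ) ∈ Set.Icc (-1 : ℝ) 1 := by
  have h := abs_real_inner_le_norm x y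
  rw [hx, hy, one_mul] at h
  exact abs_le.mp h

lemma dist_le_of_geod_le {n : ℕ} {a b c d : Euc n} (ha : ‖a‖ = 1) (hb : ‖b‖ = 1)
    (hc : ‖c‖ = 1) (hd : ‖d‖ = 1) (h : geod a b ≤ geod c d) : dist a b ≤ dist c d := by
  have h1 : (inner ℝ c d : ℝ) ≤ inner ℝ a b := by
    by_contra h'
    push_neg at h'
    have := Real.strictAntiOn_arccos (inner_mem_Icc ha hb) (inner_mem_Icc hc hd) h'
    exact absurd h (not_le.2 this)
  have e1 := inner_of_unit ha hb
  have e2 := inner_of_unit hc hd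
  nlinarith [dist_nonneg (x := a) (y := b), dist_nonneg (x := c) (y := d)]

lemma norm_of_mem_hemi {n : ℕ} {x : Euc n} (hx : x ∈ upperHemi n) : ‖x‖ = 1 :=
  mem_sphere_zero_iff_norm.mp hx.1

/-- Uniqueness of the north pole as a point with nonnegative inner products against
the hemisphere. -/
lemma eq_northPole {n : ℕ} {w : Euc n} (hw : w ∈ upperHemi n)
    (h : ∀ y ∈ upperHemi n, 0 ≤ (inner ℝ w y : ℝ)) : w = northPole n := by
  have hwn : ‖w‖ = 1 := norm_of_mem_hemi hw
  set t := w (Fin.last n) with ht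
  have htnn : 0 ≤ t := hw.2
  set v : Euc n := w - EuclideanSpace.single (Fin.last n) t with hv
  have hvlast : v (Fin.last n) = 0 := by
    simp [hv, EuclideanSpace.single_apply, ← ht]
  have hwv : (inner ℝ w v : ℝ) = 1 - t ^ 2 := by
    rw [hv, inner_sub_right, real_inner_self_eq_norm_sq, hwn]
    rw [EuclideanSpace.inner_single_right]
    simp [← ht]
    ring
  have hvv : (inner ℝ v v : ℝ) = 1 - t ^ 2 := by
    rw [hv, inner_sub_left, hwv]
    rw [EuclideanSpace.inner_single_left]
    simp [hvlast, ← ht]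
  have hv0 : v = 0 := by
    by_contra hv0
    have hvpos : 0 < ‖v‖ := norm_pos_iff.mpr hv0
    set y : Euc n := (-(‖v‖⁻¹)) • v with hy
    have hyH : y ∈ upperHemi n := by
      constructor
      · exact mem_sphere_zero_iff_norm.mpr (by
          rw [hy, norm_smul]
          simp [abs_of_pos hvpos, inv_mul_cancel₀ (ne_of_gt hvpos)])
      · show 0 ≤ y (Fin.last n)
        rw [hy]
        simp [hvlast]
    have := h y hyH
    rw [hy, real_inner_smul_right, hwv] at this
    have hv2 : ‖v‖ ^ 2 = 1 - t ^ 2 := by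
      rw [← real_inner_self_eq_norm_sq]; exact hvv
    rw [← hv2] at this
    have h2 : 0 ≤ -(‖v‖⁻¹) * ‖v‖ ^ 2 := this
    nlinarith [mul_pos (inv_pos.mpr hvpos) (pow_pos hvpos 2)]
  have hwt : w = EuclideanSpace.single (Fin.last n) t := by
    have := sub_eq_zero.mp hv0
    exact this
  have ht1 : t = 1 := by
    have : ‖w‖ = |t| := by rw [hwt, EuclideanSpace.norm_single]; rfl
    rw [hwn] at this
    rw [abs_of_nonneg htnn] at this
    exact this.symm
  rw [hwt, ht1]
  rfl


/-- A bijective `1`-Lipschitz map `T : S^n_+ → S^n_+` is an isometry fixing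
the north pole, induced by an orthogonal matrix on the first `n` coordinates; in particular
it pushes `σ_+` forward to `σ_+`. -/
theorem stmt4 (n : ℕ) (hn : 2 ≤ n) (T : Euc n → Euc n)
    (hT_maps : ∀ x ∈ upperHemi n, T x ∈ upperHemi n)
    (hT_inj : Set.InjOn T (upperHemi n))
    (hT_surj : ∀ y ∈ upperHemi n, ∃ x ∈ upperHemi n, T x = y)
    (hT_lip : ∀ x ∈ upperHemi n, ∀ y ∈ upperHemi n, geod (T x) (T y) ≤ geod x y) :
    T (northPole n) = northPole n ∧
    (∃ A : Matrix (Fin n) (Fin n) ℝ, A.transpose * A = 1 ∧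
      ∀ x ∈ upperHemi n,
        (∀ i : Fin n, T x i.castSucc = ∑ j : Fin n, A i j * x j.castSucc) ∧
        T x (Fin.last n) = x (Fin.last n)) ∧
    (∀ x ∈ upperHemi n, ∀ y ∈ upperHemi n, geod (T x) (T y) = geod x y) ∧
    Measure.map T (sigmaPlus n) = sigmaPlus n := by
  classical
  -- closedness and compactness of the hemisphere
  have hHeq : upperHemi n = Metric.sphere (0 : Euc n) 1 ∩ {x : Euc n | 0 ≤ x (Fin.last n)} := rfl
  have hH_closed : IsClosed (upperHemi n) := by
    rw [hHeq]
    exact Metric.isClosed_sphere.inter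
      (isClosed_le continuous_const (EuclideanSpace.proj (𝕜 := ℝ) (Fin.last n)).continuous)
  have hH_compact : IsCompact (upperHemi n) :=
    (isCompact_sphere (0 : Euc n) 1).of_isClosed_subset hH_closed (fun x hx => hx.1)
  haveI : CompactSpace (upperHemi n) := isCompact_iff_compactSpace.mp hH_compact
  -- the induced self-map of the hemisphere
  set f : upperHemi n → upperHemi n := fun x => ⟨T x, hT_maps x x.2⟩ with hf
  have hfs : Function.Surjective f := by
    rintro ⟨y, hy⟩
    obtain ⟨x, hx, hxy⟩ := hT_surj y hy
    exact ⟨⟨x, hx⟩, Subtype.ext hxy⟩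
  have hfl : ∀ a b : upperHemi n, dist (f a) (f b) ≤ dist a b := by
    intro a b
    rw [Subtype.dist_eq, Subtype.dist_eq]
    exact dist_le_of_geod_le (norm_of_mem_hemi (hT_maps a a.2))
      (norm_of_mem_hemi (hT_maps b b.2)) (norm_of_mem_hemi a.2) (norm_of_mem_hemi b.2)
      (hT_lip a a.2 b b.2)
  have hdist : ∀ x ∈ upperHemi n, ∀ y ∈ upperHemi n, dist (T x) (T y) = dist x y := by
    intro x hx y hy
    have := surj_lip_isom f hfs hfl ⟨x, hx⟩ ⟨y, hy⟩
    rwa [Subtype.dist_eq, Subtype.dist_eq] at this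
  have hinner : ∀ x ∈ upperHemi n, ∀ y ∈ upperHemi n,
      (inner ℝ (T x) (T y) : ℝ) = inner ℝ x y := by
    intro x hx y hy
    rw [inner_of_unit (norm_of_mem_hemi (hT_maps x hx)) (norm_of_mem_hemi (hT_maps y hy)),
      inner_of_unit (norm_of_mem_hemi hx) (norm_of_mem_hemi hy), hdist x hx y hy]
  have hgeod : ∀ x ∈ upperHemi n, ∀ y ∈ upperHemi n, geod (T x) (T y) = geod x y := by
    intro x hx y hy
    unfold geod
    rw [hinner x hx y hy]
  -- the standard basis vectors lie in the hemisphere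
  set e : Fin (n + 1) → Euc n := fun i => EuclideanSpace.single i 1 with he
  have heH : ∀ i, e i ∈ upperHemi n := by
    intro i
    constructor
    · exact mem_sphere_zero_iff_norm.mpr (by simp [he, EuclideanSpace.norm_single])
    · show 0 ≤ e i (Fin.last n)
      rw [he]
      simp only [EuclideanSpace.single_apply]
      split <;> norm_num
  have heN : e (Fin.last n) = northPole n := rfl
  -- orthonormal image basis
  set u : Fin (n + 1) → Euc n := fun i => T (e i) with hu
  have hON : Orthonormal ℝ u := by
    rw [orthonormal_iff_ite]
    intro i j
    rw [hu]
    rw [hinner (e i) (heH i) (e j) (heH j)]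
    rw [he]
    simp only [EuclideanSpace.inner_single_left, EuclideanSpace.single_apply, map_one, one_mul]
  have hspan : ⊤ ≤ Submodule.span ℝ (Set.range u) := by
    rw [hON.linearIndependent.span_eq_top_of_card_eq_finrank (by simp)]
  set B : OrthonormalBasis (Fin (n + 1)) ℝ (Euc n) := OrthonormalBasis.mk hON hspan with hB
  have hBu : ∀ i, B i = u i := fun i => by rw [hB]; simp [OrthonormalBasis.coe_mk]
  -- T agrees with the linear isometry B.repr.symm on the hemisphere
  have hTL : ∀ x ∈ upperHemi n, T x = B.repr.symm x := by
    intro x hx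
    have h1 : T x = ∑ i, B.repr (T x) i • B i := (B.sum_repr (T x)).symm
    have h2 : ∀ i, B.repr (T x) i = x i := by
      intro i
      rw [B.repr_apply_apply, hBu, hu, hinner (e i) (heH i) x hx, he]
      simp [EuclideanSpace.inner_single_left]
    rw [h1]
    rw [← B.sum_repr_symm]
    congr 1
    ext i
    rw [h2]
  -- T fixes the north pole
  have hTN : T (northPole n) = northPole n := by
    apply eq_northPole (hT_maps _ (heN ▸ heH (Fin.last n)))
    intro y hy
    obtain ⟨x, hx, hxy⟩ := hT_surj y hy
    rw [← hxy, hinner _ (heN ▸ heH (Fin.last n)) x hx]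
    rw [northPole]
    rw [EuclideanSpace.inner_single_left]
    simpa using hx.2
  -- last coordinate preserved, images of equatorial basis vectors are equatorial
  have hulast : ∀ j : Fin n, u j.castSucc (Fin.last n) = 0 := by
    intro j
    have h1 : (inner ℝ (northPole n) (u j.castSucc) : ℝ) = u j.castSucc (Fin.last n) := by
      rw [northPole, EuclideanSpace.inner_single_left]; simp
    rw [← h1, ← hTN, hu, hinner _ (heN ▸ heH (Fin.last n)) _ (heH _)]
    simp [he, northPole, EuclideanSpace.inner_single_left, EuclideanSpace.single_apply,
      (Fin.castSucc_lt_last j).ne, (Fin.castSucc_lt_last j).ne']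
  -- coordinates of T x
  have hcoord : ∀ x ∈ upperHemi n, ∀ i : Fin (n + 1), T x i = ∑ k, x k * u k i := by
    intro x hx i
    rw [hTL x hx, ← B.sum_repr_symm]
    have h3 : (∑ k, x k • B k) i = ∑ k, x k * B k i := by
      calc (∑ k, x k • B k) i = EuclideanSpace.proj (𝕜 := ℝ) i (∑ k, x k • B k) := rfl
      _ = ∑ k, EuclideanSpace.proj (𝕜 := ℝ) i (x k • B k) :=
          map_sum (EuclideanSpace.proj (𝕜 := ℝ) i) (fun k => x k • B k) Finset.univ
      _ = ∑ k, x k * B k i := by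
          refine Finset.sum_congr rfl fun k _ => ?_
          simp [smul_eq_mul]
    rw [h3]
    refine Finset.sum_congr rfl fun k _ => ?_
    rw [hBu]
  have hulastN : u (Fin.last n) = northPole n := by
    show T (e (Fin.last n)) = northPole n
    rw [heN, hTN]
  have hNcs : ∀ i : Fin n, northPole n i.castSucc = 0 := by
    intro i
    simp [northPole, EuclideanSpace.single_apply, (Fin.castSucc_lt_last i).ne]
  have hNlast : northPole n (Fin.last n) = 1 := by
    simp [northPole, EuclideanSpace.single_apply]
  -- the orthogonal matrix
  set A : Matrix (Fin n) (Fin n) ℝ := Matrix.of fun i j => u j.castSucc i.castSucc with hA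
  have hsum : ∀ i j : Fin n, (∑ k, u i.castSucc k * u j.castSucc k) =
      if i = j then (1 : ℝ) else 0 := by
    intro i j
    have h5 := orthonormal_iff_ite.mp hON i.castSucc j.castSucc
    rw [PiLp.inner_apply] at h5
    simp only [RCLike.inner_apply, conj_trivial] at h5
    rw [show (∑ k, u i.castSucc k * u j.castSucc k) = ∑ k, u j.castSucc k * u i.castSucc k from
      Finset.sum_congr rfl fun k _ => mul_comm _ _, h5]
    simp [Fin.castSucc_inj]
  have hAT : A.transpose * A = 1 := by
    ext i j
    rw [Matrix.mul_apply, Matrix.one_apply]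
    have h6 := hsum i j
    rw [Fin.sum_univ_castSucc] at h6
    rw [hulast i, zero_mul, add_zero] at h6
    rw [← h6]
    refine Finset.sum_congr rfl fun k _ => ?_
    simp [hA, Matrix.transpose_apply]
  have hmain : ∀ x ∈ upperHemi n,
      (∀ i : Fin n, T x i.castSucc = ∑ j : Fin n, A i j * x j.castSucc) ∧
      T x (Fin.last n) = x (Fin.last n) := by
    intro x hx
    constructor
    · intro i
      rw [hcoord x hx, Fin.sum_univ_castSucc, hulastN, hNcs, mul_zero, add_zero]
      refine Finset.sum_congr rfl fun j _ => ?_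
      rw [hA]
      simp [mul_comm]
    · rw [hcoord x hx, Fin.sum_univ_castSucc, hulastN, hNlast, mul_one]
      have : ∀ j : Fin n, x j.castSucc * u j.castSucc (Fin.last n) = 0 := by
        intro j
        rw [hulast j, mul_zero]
      rw [Finset.sum_congr rfl fun j _ => this j]
      simp
  -- the measure statement
  set L : Euc n ≃ₗᵢ[ℝ] Euc n := B.repr.symm with hL
  have hLmeas : Measurable (⇑L) := L.toIsometryEquiv.continuous.measurable
  have hHms : MeasurableSet (upperHemi n) := hH_closed.measurableSet
  have hTLL : ∀ x ∈ upperHemi n, T x = L x := hTL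
  have hpre : ⇑L ⁻¹' (upperHemi n) = upperHemi n := by
    ext x
    simp only [Set.mem_preimage]
    constructor
    · intro hLx
      obtain ⟨x', hx', hTx'⟩ := hT_surj (L x) hLx
      have h7 : L x' = L x := by rw [← hTLL x' hx']; exact hTx'
      have h8 : x' = x := L.injective h7
      rwa [← h8]
    · intro hx
      rw [← hTLL x hx]
      exact hT_maps x hx
  have hmapL : Measure.map (⇑L) (μH[n] : Measure (Euc n)) = μH[n] := by
    have h9 := L.toIsometryEquiv.map_hausdorffMeasure (n : ℝ)
    have h10 : ⇑L.toIsometryEquiv = ⇑L := rfl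
    rwa [h10] at h9
  have hmeasure : Measure.map T (sigmaPlus n) = sigmaPlus n := by
    rw [sigmaPlus, Measure.map_smul]
    congr 1
    have hae : T =ᵐ[(μH[n] : Measure (Euc n)).restrict (upperHemi n)] ⇑L := by
      filter_upwards [ae_restrict_mem hHms] with x hx using hTLL x hx
    rw [Measure.map_congr hae]
    calc Measure.map ⇑L ((μH[n] : Measure (Euc n)).restrict (upperHemi n))
        = Measure.map ⇑L ((μH[n] : Measure (Euc n)).restrict (⇑L ⁻¹' upperHemi n)) := by
          rw [hpre]
    _ = (Measure.map ⇑L (μH[n] : Measure (Euc n))).restrict (upperHemi n) :=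
          (Measure.restrict_map hLmeas hHms).symm
    _ = (μH[n] : Measure (Euc n)).restrict (upperHemi n) := by rw [hmapL]
  exact ⟨hTN, ⟨A, hAT, hmain⟩, hgeod, hmeasure⟩

end
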